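/- Let V be a valuation ring whose maximal ideal m satisfies m² = m, and let a, x ∈ V with a ≠ 0. If c·x ∈ aV for every c ∈ m, then x ∈ aV. Equivalently, the quotient module V/aV has no nonzero elements annihilated by all of m. -/

import Mathlib

/-- Let `V` be a valuation ring whose maximal ideal `m` satisfies `m ^ 2 = m`,
and `a ≠ 0`, `x` elements of `V`. If `c * x ∈ (a)` for every `c ∈ m`, then
`x ∈ (a)`; i.e. `V/aV` has no nonzero elements annihilated by all of `m`. -/
theorem mem_span_of_forall_mul_mem {V : Type*} [CommRing V] [IsDomain V] [ValuationRing V]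
    (hm : (IsLocalRing.maximalIdeal V) ^ 2 = IsLocalRing.maximalIdeal V)
    (a x : V) (ha : a ≠ 0)
    (h : ∀ c ∈ IsLocalRing.maximalIdeal V, c * x ∈ Ideal.span {a}) :
    x ∈ Ideal.span {a} := by
  rcases ValuationRing.cond a x with ⟨c, hc | hc⟩
  · exact Ideal.mem_span_singleton.mpr ⟨c, hc.symm⟩
  · obtain ⟨t, ht⟩ : ∃ t, x * t = a := ⟨c, hc⟩
    by_cases htu : IsUnit t
    · rcases htu with ⟨u, rfl⟩
      refine Ideal.mem_span_singleton.mpr ⟨(↑u⁻¹ : Vˣ), ?_⟩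
      rw [← ht]
      simp [mul_assoc]
    · have htm : t ∈ IsLocalRing.maximalIdeal V := htu
      have htm2 : t ∈ (IsLocalRing.maximalIdeal V) * (IsLocalRing.maximalIdeal V) := by
        rw [← sq, hm]; exact htm
      have key : x * t ∈ Ideal.span {a} * IsLocalRing.maximalIdeal V := by
        refine Submodule.mul_induction_on htm2 (fun c hc d hd => ?_) (fun y z hy hz => ?_)
        · have : x * (c * d) = (c * x) * d := by ring
          rw [this]
          exact Ideal.mul_mem_mul (h c hc) hd
        · rw [mul_add]; exact add_mem hy hz
      rw [ht] at key
      rw [Ideal.mem_span_singleton_mul] at key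
      rcases key with ⟨y, hy, hay⟩
      have : y = 1 := by
        have := mul_left_cancel₀ ha (hay.trans (mul_one a).symm)
        exact this
      rw [this] at hy
      exact absurd hy (by simpa using (IsLocalRing.maximalIdeal.isMaximal V).ne_top ∘ (Ideal.eq_top_iff_one _).mpr)
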